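/- Let m ≥ 1, let M and M′ be m×m integer matrices, and let c_1,…,c_m be arbitrary integers. Define the 2m×2m integer matrix Ã by: Ã_{1,2j−1} = M′_{1,j} and Ã_{1,2j} = c_j for 1 ≤ j ≤ m; Ã_{2i−1,2j−1} = M′_{i,j} and Ã_{2i−1,2j} = M_{i−1,j} − M_{m,j} for 2 ≤ i ≤ m and 1 ≤ j ≤ m; and Ã_{2i,2j−1} = M′_{i+1,j} (with the convention M′_{m+1,j} = 0) and Ã_{2i,2j} = −M_{m,j} for 1 ≤ i ≤ m and 1 ≤ j ≤ m. Then |det(Ã)| = |det(M)| · |det(M′)|. -/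

import Mathlib

namespace Stmt13Aux

open Matrix Equiv

def cInv (m : ℕ) : (Fin m ⊕ Fin m) → Fin (2 * m) :=
  Sum.elim (fun j : Fin m => ⟨2 * (j : ℕ), (by have := j.isLt; omega : 2 * (j : ℕ) < 2 * m + 0)⟩)
    (fun j : Fin m => ⟨2 * (j : ℕ) + 1, (by have := j.isLt; omega : 2 * (j : ℕ) + 1 < 2 * m + 0)⟩)

lemma cInv_bij (m : ℕ) : Function.Bijective (cInv m) := by
  rw [Fintype.bijective_iff_injective_and_card]
  refine ⟨?_, by simp only [Fintype.card_sum, Fintype.card_fin]; omega⟩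
  rintro (p | p) (q | q) h <;>
    simp only [cInv, Sum.elim_inl, Sum.elim_inr, Fin.mk.injEq] at h <;>
    first
      | exact congrArg _ (Fin.ext (by omega))
      | omega

noncomputable def cEq (m : ℕ) : Fin (2 * m) ≃ (Fin m ⊕ Fin m) :=
  (Equiv.ofBijective (cInv m) (cInv_bij m)).symm

lemma cEq_even (m : ℕ) (l : Fin (2 * m)) (j : Fin m) (h : (l : ℕ) = 2 * (j : ℕ)) :
    cEq m l = Sum.inl j := by
  rw [cEq, Equiv.symm_apply_eq, Equiv.ofBijective_apply]
  exact Fin.ext h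

lemma cEq_odd (m : ℕ) (l : Fin (2 * m)) (j : Fin m) (h : (l : ℕ) = 2 * (j : ℕ) + 1) :
    cEq m l = Sum.inr j := by
  rw [cEq, Equiv.symm_apply_eq, Equiv.ofBijective_apply]
  exact Fin.ext h

def pf (m : ℕ) (k : Fin (2 * m)) : Fin (2 * m) :=
  if _h : (k : ℕ) % 2 = 1 ∧ (k : ℕ) < 2 * m - 1 then ⟨(k : ℕ) + 1, by have := k.isLt; omega⟩
  else if (k : ℕ) % 2 = 0 ∧ 1 ≤ (k : ℕ) then ⟨(k : ℕ) - 1, by have := k.isLt; omega⟩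
  else k

lemma pf_odd {m : ℕ} (k : Fin (2 * m)) (h1 : (k : ℕ) % 2 = 1) (h2 : (k : ℕ) < 2 * m - 1) :
    ((pf m k) : ℕ) = (k : ℕ) + 1 := by
  unfold pf; rw [dif_pos ⟨h1, h2⟩]

lemma pf_even {m : ℕ} (k : Fin (2 * m)) (h1 : (k : ℕ) % 2 = 0) (h2 : 1 ≤ (k : ℕ)) :
    ((pf m k) : ℕ) = (k : ℕ) - 1 := by
  unfold pf; rw [dif_neg (by omega), if_pos ⟨h1, h2⟩]

lemma pf_fix {m : ℕ} (k : Fin (2 * m)) (h : (k : ℕ) = 0 ∨ (k : ℕ) = 2 * m - 1) :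
    pf m k = k := by
  have hk := k.isLt
  unfold pf; rw [dif_neg (by omega), if_neg (by omega)]

lemma pf_invol (m : ℕ) (k : Fin (2 * m)) : pf m (pf m k) = k := by
  have hk := k.isLt
  by_cases h1 : (k : ℕ) % 2 = 1 ∧ (k : ℕ) < 2 * m - 1
  · have e1 : ((pf m k) : ℕ) = (k : ℕ) + 1 := pf_odd k h1.1 h1.2
    apply Fin.ext
    rw [pf_even (pf m k) (by rw [e1]; omega) (by rw [e1]; omega), e1]
    omega
  · by_cases h2 : (k : ℕ) % 2 = 0 ∧ 1 ≤ (k : ℕ)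
    · have e1 : ((pf m k) : ℕ) = (k : ℕ) - 1 := pf_even k h2.1 h2.2
      apply Fin.ext
      rw [pf_odd (pf m k) (by rw [e1]; omega) (by rw [e1]; omega), e1]
      omega
    · have e1 : pf m k = k := pf_fix k (by omega)
      rw [e1, e1]

def pPerm (m : ℕ) : Equiv.Perm (Fin (2 * m)) := ⟨pf m, pf m, pf_invol m, pf_invol m⟩


def L1 (m : ℕ) : Matrix (Fin (2 * m)) (Fin (2 * m)) ℤ := fun k t =>
  (if t = k then 1 else 0) +
    (if (k : ℕ) % 2 = 0 ∧ 2 ≤ (k : ℕ) ∧ (t : ℕ) + 1 = (k : ℕ) then 1 else 0)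

def L2 (m : ℕ) : Matrix (Fin (2 * m)) (Fin (2 * m)) ℤ := fun k t =>
  (if t = k then 1 else 0) +
    (if (k : ℕ) % 2 = 1 ∧ (k : ℕ) < 2 * m - 1 ∧ (t : ℕ) = 2 * m - 1 then 1 else 0)

lemma detL1 (m : ℕ) : (L1 m).det = 1 := by
  rw [Matrix.det_of_lowerTriangular (L1 m) (fun i j h => ?_)]
  · refine Finset.prod_eq_one fun k _ => ?_
    have h2 : ¬((k : ℕ) % 2 = 0 ∧ 2 ≤ (k : ℕ) ∧ (k : ℕ) + 1 = (k : ℕ)) := by omega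
    simp [L1, h2]
  · replace h : (i : ℕ) < (j : ℕ) := h
    have h1 : ¬(j = i) := fun hc => by rw [hc] at h; omega
    have h2 : ¬((i : ℕ) % 2 = 0 ∧ 2 ≤ (i : ℕ) ∧ (j : ℕ) + 1 = (i : ℕ)) := by omega
    simp [L1, h1, h2]

lemma detL2 (m : ℕ) : (L2 m).det = 1 := by
  rw [Matrix.det_of_upperTriangular (M := L2 m) (fun i j h => ?_)]
  · refine Finset.prod_eq_one fun k _ => ?_
    have hk := k.isLt
    have h2 : ¬((k : ℕ) % 2 = 1 ∧ (k : ℕ) < 2 * m - 1 ∧ (k : ℕ) = 2 * m - 1) := by omega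
    simp [L2, h2]
  · replace h : (j : ℕ) < (i : ℕ) := h
    have hi := i.isLt
    have h1 : ¬(j = i) := fun hc => by rw [hc] at h; omega
    have h2 : ¬((i : ℕ) % 2 = 1 ∧ (i : ℕ) < 2 * m - 1 ∧ (j : ℕ) = 2 * m - 1) := by omega
    simp [L2, h1, h2]

lemma L1_mul (m : ℕ) (X : Matrix (Fin (2 * m)) (Fin (2 * m)) ℤ) (k l : Fin (2 * m)) :
    (L1 m * X) k l = X k l +
      (if (k : ℕ) % 2 = 0 ∧ 2 ≤ (k : ℕ) then
        X ⟨(k : ℕ) - 1, by have := k.isLt; omega⟩ l else 0) := by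
  simp only [Matrix.mul_apply, L1, add_mul, ite_mul, one_mul, zero_mul]
  rw [Finset.sum_add_distrib]
  congr 1
  · simp
  · by_cases h : (k : ℕ) % 2 = 0 ∧ 2 ≤ (k : ℕ)
    · rw [if_pos h]
      have he : ∀ t : Fin (2 * m),
          (if (k : ℕ) % 2 = 0 ∧ 2 ≤ (k : ℕ) ∧ (t : ℕ) + 1 = (k : ℕ) then X t l else 0) =
          (if t = ⟨(k : ℕ) - 1, by have := k.isLt; omega⟩ then X t l else 0) := by
        intro t
        congr 1
        simp only [eq_iff_iff, Fin.ext_iff, Fin.val_mk]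
        constructor
        · rintro ⟨-, -, h3⟩; omega
        · intro ht; exact ⟨h.1, h.2, by omega⟩
      rw [Finset.sum_congr rfl fun t _ => he t]
      simp
    · rw [if_neg h]
      exact Finset.sum_eq_zero fun t _ => if_neg (by tauto)

lemma L2_mul (m : ℕ) (X : Matrix (Fin (2 * m)) (Fin (2 * m)) ℤ) (k l : Fin (2 * m)) :
    (L2 m * X) k l = X k l +
      (if (k : ℕ) % 2 = 1 ∧ (k : ℕ) < 2 * m - 1 then
        X ⟨2 * m - 1, by have := k.isLt; omega⟩ l else 0) := by
  simp only [Matrix.mul_apply, L2, add_mul, ite_mul, one_mul, zero_mul]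
  rw [Finset.sum_add_distrib]
  congr 1
  · simp
  · by_cases h : (k : ℕ) % 2 = 1 ∧ (k : ℕ) < 2 * m - 1
    · rw [if_pos h]
      have he : ∀ t : Fin (2 * m),
          (if (k : ℕ) % 2 = 1 ∧ (k : ℕ) < 2 * m - 1 ∧ (t : ℕ) = 2 * m - 1 then X t l else 0) =
          (if t = ⟨2 * m - 1, by have := k.isLt; omega⟩ then X t l else 0) := by
        intro t
        congr 1
        simp only [eq_iff_iff, Fin.ext_iff, Fin.val_mk]
        constructor
        · rintro ⟨-, -, h3⟩; omega
        · intro ht; exact ⟨h.1, h.2, by omega⟩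
      rw [Finset.sum_congr rfl fun t _ => he t]
      simp
    · rw [if_neg h]
      exact Finset.sum_eq_zero fun t _ => if_neg (by tauto)


def Cmat (m : ℕ) (c : Fin m → ℤ) : Matrix (Fin m) (Fin m) ℤ :=
  fun p j => if (p : ℕ) = 0 then c j else 0

def Dmat (m : ℕ) (M : Matrix (Fin m) (Fin m) ℤ) : Matrix (Fin m) (Fin m) ℤ :=
  fun q j => if (q : ℕ) = m - 1 then -M q j else M q j

def Fmat (m : ℕ) (M M' : Matrix (Fin m) (Fin m) ℤ) (c : Fin m → ℤ) :
    Matrix (Fin m ⊕ Fin m) (Fin m ⊕ Fin m) ℤ :=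
  Matrix.fromBlocks M' (Cmat m c) 0 (Dmat m M)

noncomputable def Bmat (m : ℕ) (M M' : Matrix (Fin m) (Fin m) ℤ) (c : Fin m → ℤ) :
    Matrix (Fin (2 * m)) (Fin (2 * m)) ℤ :=
  (((Fmat m M M' c).submatrix (cEq m) (cEq m)).submatrix (pPerm m) id)

variable {m : ℕ} (M M' : Matrix (Fin m) (Fin m) ℤ) (c : Fin m → ℤ)

lemma B_apply (k l : Fin (2 * m)) :
    Bmat m M M' c k l = Fmat m M M' c (cEq m (pf m k)) (cEq m l) := rfl

lemma row_inl0 (k : Fin (2 * m)) (h : (k : ℕ) = 0) :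
    cEq m (pf m k) = Sum.inl ⟨0, by have := k.isLt; omega⟩ := by
  rw [pf_fix k (Or.inl h)]
  exact cEq_even m k _ (by simpa using h)

lemma row_inl (k : Fin (2 * m)) (p : Fin m) (h : (k : ℕ) + 1 = 2 * (p : ℕ)) :
    cEq m (pf m k) = Sum.inl p := by
  have hp := p.isLt
  apply cEq_even
  rw [pf_odd k (by omega) (by omega)]
  omega

lemma row_inr1 (k : Fin (2 * m)) (q : Fin m) (h : (k : ℕ) = 2 * (q : ℕ) + 2) :
    cEq m (pf m k) = Sum.inr q := by
  apply cEq_odd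
  rw [pf_even k (by omega) (by omega)]
  omega

lemma row_inr2 (k : Fin (2 * m)) (h : (k : ℕ) = 2 * m - 1) :
    cEq m (pf m k) = Sum.inr ⟨m - 1, by have := k.isLt; omega⟩ := by
  have hk := k.isLt
  rw [pf_fix k (Or.inr h)]
  apply cEq_odd
  simp only [Fin.val_mk]
  omega

lemma B_00e (k l : Fin (2 * m)) (j : Fin m) (hk : (k : ℕ) = 0) (hl : (l : ℕ) = 2 * (j : ℕ)) :
    Bmat m M M' c k l = M' ⟨0, by have := k.isLt; omega⟩ j := by
  rw [B_apply, row_inl0 k hk, cEq_even m l j hl]; rfl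

lemma B_00o (k l : Fin (2 * m)) (j : Fin m) (hk : (k : ℕ) = 0) (hl : (l : ℕ) = 2 * (j : ℕ) + 1) :
    Bmat m M M' c k l = c j := by
  rw [B_apply, row_inl0 k hk, cEq_odd m l j hl]
  simp [Fmat, Cmat]

lemma B_oe (k l : Fin (2 * m)) (p j : Fin m) (hk : (k : ℕ) + 1 = 2 * (p : ℕ))
    (hl : (l : ℕ) = 2 * (j : ℕ)) : Bmat m M M' c k l = M' p j := by
  rw [B_apply, row_inl k p hk, cEq_even m l j hl]; rfl

lemma B_oo (k l : Fin (2 * m)) (p j : Fin m) (hk : (k : ℕ) + 1 = 2 * (p : ℕ))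
    (hl : (l : ℕ) = 2 * (j : ℕ) + 1) : Bmat m M M' c k l = 0 := by
  rw [B_apply, row_inl k p hk, cEq_odd m l j hl]
  have hp : ¬((p : ℕ) = 0) := by omega
  simp [Fmat, Cmat, hp]

lemma B_re1 (k l : Fin (2 * m)) (q j : Fin m) (hk : (k : ℕ) = 2 * (q : ℕ) + 2)
    (hl : (l : ℕ) = 2 * (j : ℕ)) : Bmat m M M' c k l = 0 := by
  rw [B_apply, row_inr1 k q hk, cEq_even m l j hl]; rfl

lemma B_ro1 (k l : Fin (2 * m)) (q j : Fin m) (hk : (k : ℕ) = 2 * (q : ℕ) + 2)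
    (hl : (l : ℕ) = 2 * (j : ℕ) + 1) : Bmat m M M' c k l = M q j := by
  rw [B_apply, row_inr1 k q hk, cEq_odd m l j hl]
  have hq : ¬((q : ℕ) = m - 1) := by have := k.isLt; omega
  simp [Fmat, Dmat, hq]

lemma B_re2 (k l : Fin (2 * m)) (j : Fin m) (hk : (k : ℕ) = 2 * m - 1)
    (hl : (l : ℕ) = 2 * (j : ℕ)) : Bmat m M M' c k l = 0 := by
  rw [B_apply, row_inr2 k hk, cEq_even m l j hl]; rfl

lemma B_ro2 (k l : Fin (2 * m)) (j : Fin m) (hk : (k : ℕ) = 2 * m - 1)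
    (hl : (l : ℕ) = 2 * (j : ℕ) + 1) :
    Bmat m M M' c k l = -M ⟨m - 1, by have := k.isLt; omega⟩ j := by
  rw [B_apply, row_inr2 k hk, cEq_odd m l j hl]
  simp [Fmat, Dmat]

lemma detD (hm : 1 ≤ m) : (Dmat m M).det = -M.det := by
  have e1 : Dmat m M = M.updateRow ⟨m - 1, by omega⟩ ((-1 : ℤ) • (M ⟨m - 1, by omega⟩)) := by
    funext q j
    by_cases h : (q : ℕ) = m - 1
    · have hq : q = (⟨m - 1, by omega⟩ : Fin m) := Fin.ext h
      rw [hq]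
      simp [Dmat, Matrix.updateRow_self]
    · rw [Matrix.updateRow_ne (fun hc => h (by rw [hc]))]
      simp [Dmat, h]
  rw [e1, Matrix.det_updateRow_smul, Matrix.updateRow_eq_self]
  ring

lemma detB (hm : 1 ≤ m) : |(Bmat m M M' c).det| = |M.det| * |M'.det| := by
  have h1 : (Bmat m M M' c).det =
      (Equiv.Perm.sign (pPerm m) : ℤ) * ((Fmat m M M' c).submatrix (cEq m) (cEq m)).det := by
    rw [Bmat]
    exact Matrix.det_permute (pPerm m) _
  rw [h1, Matrix.det_submatrix_equiv_self, abs_mul]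
  have hsign : |((Equiv.Perm.sign (pPerm m) : ℤˣ) : ℤ)| = 1 := by
    rcases Int.units_eq_one_or (Equiv.Perm.sign (pPerm m)) with h | h <;> simp [h]
  rw [hsign, one_mul, Fmat, Matrix.det_fromBlocks_zero₂₁, detD M hm, abs_mul, abs_neg]
  ring

end Stmt13Aux

set_option maxHeartbeats 1000000

/-- Let `m ≥ 1`, `M, M′` be `m × m` integer matrices and `c_1,…,c_m` integers.
Define the `2m × 2m` integer matrix `Ã` (1-indexed) by `Ã_{1,2j-1} = M′_{1,j}`,
`Ã_{1,2j} = c_j`; `Ã_{2i-1,2j-1} = M′_{i,j}` and `Ã_{2i-1,2j} = M_{i-1,j} - M_{m,j}` for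
`2 ≤ i ≤ m`; `Ã_{2i,2j-1} = M′_{i+1,j}` (with `M′_{m+1,j} = 0`) and `Ã_{2i,2j} = -M_{m,j}`
for `1 ≤ i ≤ m`. Then `|det Ã| = |det M| · |det M′|`.
(Below everything is 0-indexed: 1-indexed row `2i-1` is row `2(i-1)`, row `2i` is
row `2(i-1)+1`.) -/
theorem stmt13 (m : ℕ) (hm : 1 ≤ m)
    (M M' : Matrix (Fin m) (Fin m) ℤ) (c : Fin m → ℤ)
    (A : Matrix (Fin (2 * m)) (Fin (2 * m)) ℤ)
    (hrow1 : ∀ j : Fin m,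
      A ⟨0, by omega⟩ ⟨2 * (j : ℕ), by have := j.isLt; omega⟩ = M' ⟨0, by omega⟩ j ∧
      A ⟨0, by omega⟩ ⟨2 * (j : ℕ) + 1, by have := j.isLt; omega⟩ = c j)
    (hodd : ∀ i j : Fin m, 1 ≤ (i : ℕ) →
      A ⟨2 * (i : ℕ), by have := i.isLt; omega⟩
        ⟨2 * (j : ℕ), by have := j.isLt; omega⟩ = M' i j ∧
      A ⟨2 * (i : ℕ), by have := i.isLt; omega⟩
        ⟨2 * (j : ℕ) + 1, by have := j.isLt; omega⟩ =
          M ⟨(i : ℕ) - 1, by have := i.isLt; omega⟩ j - M ⟨m - 1, by omega⟩ j)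
    (heven : ∀ i j : Fin m,
      A ⟨2 * (i : ℕ) + 1, by have := i.isLt; omega⟩
        ⟨2 * (j : ℕ), by have := j.isLt; omega⟩ =
          (if h : (i : ℕ) + 1 < m then M' ⟨(i : ℕ) + 1, h⟩ j else 0) ∧
      A ⟨2 * (i : ℕ) + 1, by have := i.isLt; omega⟩
        ⟨2 * (j : ℕ) + 1, by have := j.isLt; omega⟩ = -M ⟨m - 1, by omega⟩ j) :
    |A.det| = |M.det| * |M'.det| := by
  classical
  have hA0e : ∀ (k l : Fin (2 * m)) (j : Fin m), (k : ℕ) = 0 → (l : ℕ) = 2 * (j : ℕ) →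
      A k l = M' ⟨0, by omega⟩ j := by
    intro k l j hk hl
    have ek : k = ⟨0, by omega⟩ := Fin.ext hk
    have el : l = ⟨2 * (j : ℕ), by have := j.isLt; omega⟩ := Fin.ext hl
    rw [ek, el]; exact (hrow1 j).1
  have hA0o : ∀ (k l : Fin (2 * m)) (j : Fin m), (k : ℕ) = 0 → (l : ℕ) = 2 * (j : ℕ) + 1 →
      A k l = c j := by
    intro k l j hk hl
    have ek : k = ⟨0, by omega⟩ := Fin.ext hk
    have el : l = ⟨2 * (j : ℕ) + 1, by have := j.isLt; omega⟩ := Fin.ext hl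
    rw [ek, el]; exact (hrow1 j).2
  have hAee : ∀ (k l : Fin (2 * m)) (i j : Fin m), (k : ℕ) = 2 * (i : ℕ) → 1 ≤ (i : ℕ) →
      (l : ℕ) = 2 * (j : ℕ) → A k l = M' i j := by
    intro k l i j hk hi hl
    have ek : k = ⟨2 * (i : ℕ), by have := i.isLt; omega⟩ := Fin.ext hk
    have el : l = ⟨2 * (j : ℕ), by have := j.isLt; omega⟩ := Fin.ext hl
    rw [ek, el]; exact (hodd i j hi).1
  have hAeo : ∀ (k l : Fin (2 * m)) (i j : Fin m), (k : ℕ) = 2 * (i : ℕ) → 1 ≤ (i : ℕ) →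
      (l : ℕ) = 2 * (j : ℕ) + 1 →
      A k l = M ⟨(i : ℕ) - 1, by have := i.isLt; omega⟩ j - M ⟨m - 1, by omega⟩ j := by
    intro k l i j hk hi hl
    have ek : k = ⟨2 * (i : ℕ), by have := i.isLt; omega⟩ := Fin.ext hk
    have el : l = ⟨2 * (j : ℕ) + 1, by have := j.isLt; omega⟩ := Fin.ext hl
    rw [ek, el]; exact (hodd i j hi).2
  have hAoe : ∀ (k l : Fin (2 * m)) (i j : Fin m), (k : ℕ) = 2 * (i : ℕ) + 1 →
      (l : ℕ) = 2 * (j : ℕ) →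
      A k l = (if h : (i : ℕ) + 1 < m then M' ⟨(i : ℕ) + 1, h⟩ j else 0) := by
    intro k l i j hk hl
    have ek : k = ⟨2 * (i : ℕ) + 1, by have := i.isLt; omega⟩ := Fin.ext hk
    have el : l = ⟨2 * (j : ℕ), by have := j.isLt; omega⟩ := Fin.ext hl
    rw [ek, el]; exact (heven i j).1
  have hAoo : ∀ (k l : Fin (2 * m)) (i j : Fin m), (k : ℕ) = 2 * (i : ℕ) + 1 →
      (l : ℕ) = 2 * (j : ℕ) + 1 → A k l = -M ⟨m - 1, by omega⟩ j := by
    intro k l i j hk hl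
    have ek : k = ⟨2 * (i : ℕ) + 1, by have := i.isLt; omega⟩ := Fin.ext hk
    have el : l = ⟨2 * (j : ℕ) + 1, by have := j.isLt; omega⟩ := Fin.ext hl
    rw [ek, el]; exact (heven i j).2
  have key : A = Stmt13Aux.L1 m * (Stmt13Aux.L2 m * Stmt13Aux.Bmat m M M' c) := by
    funext k l
    rw [Stmt13Aux.L1_mul, Stmt13Aux.L2_mul]
    have hk2 := k.isLt
    have hl2 := l.isLt
    obtain ⟨j', hj'⟩ : ∃ j : Fin m, (l : ℕ) = 2 * (j : ℕ) ∨ (l : ℕ) = 2 * (j : ℕ) + 1 := by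
      refine ⟨⟨(l : ℕ) / 2, by omega⟩, ?_⟩
      simp only [Fin.val_mk]
      omega
    by_cases hk0 : (k : ℕ) = 0
    · rw [if_neg (by omega), if_neg (by omega)]
      rcases hj' with hl | hl
      · rw [hA0e k l j' hk0 hl, Stmt13Aux.B_00e M M' c k l j' hk0 hl]
        simp only [add_zero, zero_add]
      · rw [hA0o k l j' hk0 hl, Stmt13Aux.B_00o M M' c k l j' hk0 hl]
        simp only [add_zero, zero_add]
    · by_cases hke : (k : ℕ) % 2 = 0
      · -- k even, k ≥ 2
        rw [if_neg (by omega), if_pos (by omega), Stmt13Aux.L2_mul]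
        rw [if_pos (by simp only [Fin.val_mk]; omega)]
        obtain ⟨i', hiv⟩ : ∃ i : Fin m, 2 * (i : ℕ) = (k : ℕ) :=
          ⟨⟨(k : ℕ) / 2, by omega⟩, by simp only [Fin.val_mk]; omega⟩
        have hki : (k : ℕ) = 2 * (i' : ℕ) := hiv.symm
        have hge : 1 ≤ (i' : ℕ) := by omega
        have hi1 : (i' : ℕ) - 1 < m := by have := i'.isLt; omega
        have hkq : (k : ℕ) = 2 * ((⟨(i' : ℕ) - 1, hi1⟩ : Fin m) : ℕ) + 2 := by
          simp only [Fin.val_mk]; omega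
        have hkm1 : ((⟨(k : ℕ) - 1, by omega⟩ : Fin (2 * m)) : ℕ) + 1 = 2 * (i' : ℕ) := by
          simp only [Fin.val_mk]; omega
        have hlast : ((⟨2 * m - 1, by omega⟩ : Fin (2 * m)) : ℕ) = 2 * m - 1 := rfl
        rcases hj' with hl | hl
        · rw [hAee k l i' j' hki hge hl,
            Stmt13Aux.B_re1 M M' c k l ⟨(i' : ℕ) - 1, hi1⟩ j' hkq hl,
            Stmt13Aux.B_oe M M' c _ l i' j' hkm1 hl,
            Stmt13Aux.B_re2 M M' c _ l j' hlast hl]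
          simp only [add_zero, zero_add]
        · rw [hAeo k l i' j' hki hge hl,
            Stmt13Aux.B_ro1 M M' c k l ⟨(i' : ℕ) - 1, hi1⟩ j' hkq hl,
            Stmt13Aux.B_oo M M' c _ l i' j' hkm1 hl,
            Stmt13Aux.B_ro2 M M' c _ l j' hlast hl]
          simp only [add_zero, zero_add, sub_eq_add_neg]
      · -- k odd
        by_cases hkl : (k : ℕ) = 2 * m - 1
        · rw [if_neg (by omega), if_neg (by omega)]
          obtain ⟨i', hiv⟩ : ∃ i : Fin m, 2 * (i : ℕ) + 1 = (k : ℕ) :=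
            ⟨⟨m - 1, by omega⟩, by simp only [Fin.val_mk]; omega⟩
          have hki : (k : ℕ) = 2 * (i' : ℕ) + 1 := hiv.symm
          rcases hj' with hl | hl
          · rw [hAoe k l i' j' hki hl, dif_neg (by omega),
              Stmt13Aux.B_re2 M M' c k l j' hkl hl]
            simp only [add_zero, zero_add]
          · rw [hAoo k l i' j' hki hl, Stmt13Aux.B_ro2 M M' c k l j' hkl hl]
            simp only [add_zero, zero_add]
        · -- k odd, k < 2m-1
          rw [if_pos (by omega), if_neg (by omega)]
          obtain ⟨i', hiv⟩ : ∃ i : Fin m, 2 * (i : ℕ) + 1 = (k : ℕ) :=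
            ⟨⟨(k : ℕ) / 2, by omega⟩, by simp only [Fin.val_mk]; omega⟩
          have hki : (k : ℕ) = 2 * (i' : ℕ) + 1 := hiv.symm
          have hip : (i' : ℕ) + 1 < m := by omega
          have hkp : (k : ℕ) + 1 = 2 * ((⟨(i' : ℕ) + 1, hip⟩ : Fin m) : ℕ) := by
            simp only [Fin.val_mk]; omega
          have hlast : ((⟨2 * m - 1, by omega⟩ : Fin (2 * m)) : ℕ) = 2 * m - 1 := rfl
          rcases hj' with hl | hl
          · rw [hAoe k l i' j' hki hl, dif_pos hip,
              Stmt13Aux.B_oe M M' c k l ⟨(i' : ℕ) + 1, hip⟩ j' hkp hl,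
              Stmt13Aux.B_re2 M M' c _ l j' hlast hl]
            simp only [add_zero, zero_add]
          · rw [hAoo k l i' j' hki hl,
              Stmt13Aux.B_oo M M' c k l ⟨(i' : ℕ) + 1, hip⟩ j' hkp hl,
              Stmt13Aux.B_ro2 M M' c _ l j' hlast hl]
            simp only [add_zero, zero_add]
  rw [key, Matrix.det_mul, Matrix.det_mul, Stmt13Aux.detL1, Stmt13Aux.detL2, one_mul, one_mul]
  exact Stmt13Aux.detB M M' c hm
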